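/- Let x* be the minimizer of f, so that ∇f(x*) = 0. Then for every x in E, (1/n) Σ_{i=1}^n ‖∇f_i(x) − ∇f_i(x*)‖² ≤ 2L (f(x) − f(x*)). -/

import Mathlib

open scoped RealInnerProductSpace BigOperators

lemma key_ineq {E : Type*} [NormedAddCommGroup E] [InnerProductSpace ℝ E] [CompleteSpace E]
    {φ : E → ℝ} {L : ℝ} (hL : 0 < L)
    (hc : ∀ x z : E, φ x + ⟪gradient φ x, z - x⟫ ≤ φ z)
    (hs : ∀ x z : E, φ z ≤ φ x + ⟪gradient φ x, z - x⟫ + L / 2 * ‖z - x‖ ^ 2)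
    (x y : E) :
    ‖gradient φ x - gradient φ y‖ ^ 2 ≤
      2 * L * (φ x - φ y - ⟪gradient φ y, x - y⟫) := by
  set a := gradient φ x with ha
  set b := gradient φ y with hb
  set z := x - L⁻¹ • (a - b) with hz
  have h1 := hc y z
  have h2 := hs x z
  have e1 : ⟪b, z - y⟫ = ⟪b, x - y⟫ - L⁻¹ * ⟪b, a - b⟫ := by
    rw [hz, sub_right_comm, inner_sub_right, real_inner_smul_right]
  have e2 : ⟪a, z - x⟫ = -(L⁻¹ * ⟪a, a - b⟫) := by
    rw [hz, sub_sub_cancel_left, inner_neg_right, real_inner_smul_right]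
  have e3 : ‖z - x‖ ^ 2 = L⁻¹ ^ 2 * ‖a - b‖ ^ 2 := by
    rw [hz, sub_sub_cancel_left, norm_neg, norm_smul, mul_pow, Real.norm_eq_abs,
      sq_abs]
  have e4 : ⟪a, a - b⟫ - ⟪b, a - b⟫ = ‖a - b‖ ^ 2 := by
    rw [← inner_sub_left, real_inner_self_eq_norm_sq]
  rw [e1] at h1
  rw [e2, e3] at h2
  have hL' : L⁻¹ * L = 1 := inv_mul_cancel₀ hL.ne'
  have e4' : L⁻¹ * ⟪a, a - b⟫ - L⁻¹ * ⟪b, a - b⟫ = L⁻¹ * ‖a - b‖ ^ 2 := by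
    rw [← mul_sub, e4]
  have e5 : L / 2 * (L⁻¹ ^ 2 * ‖a - b‖ ^ 2) = L⁻¹ / 2 * ‖a - b‖ ^ 2 := by
    field_simp
  rw [e5] at h2
  have h3 : L⁻¹ / 2 * ‖a - b‖ ^ 2 ≤ φ x - φ y - ⟪b, x - y⟫ := by linarith
  have h4 := mul_le_mul_of_nonneg_left h3 (by positivity : (0:ℝ) ≤ 2 * L)
  calc ‖a - b‖ ^ 2 = 2 * L * (L⁻¹ / 2 * ‖a - b‖ ^ 2) := by
        field_simp
    _ ≤ 2 * L * (φ x - φ y - ⟪b, x - y⟫) := h4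

/-- For differentiable, convex, `L`-smooth functions `f i` with average `f`
and a stationary point `xstar` of `f`, we have
`(1/n) ∑ i, ‖∇f_i x − ∇f_i x*‖² ≤ 2L (f x − f x*)`. -/
theorem s2gd_grad_norm_bound
    {E : Type*} [NormedAddCommGroup E] [InnerProductSpace ℝ E] [CompleteSpace E]
    {n : ℕ} (hn : 0 < n) (f : Fin n → E → ℝ) {L : ℝ} (hL : 0 < L)
    (hdiff : ∀ i, Differentiable ℝ (f i))
    (hconv : ∀ i, ∀ x z : E, f i x + ⟪gradient (f i) x, z - x⟫ ≤ f i z)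
    (hsmooth : ∀ i, ∀ x z : E,
      f i z ≤ f i x + ⟪gradient (f i) x, z - x⟫ + L / 2 * ‖z - x‖ ^ 2)
    (favg : E → ℝ) (hfavg : favg = fun x => (1 / (n : ℝ)) * ∑ i, f i x)
    (xstar : E) (hstar : gradient favg xstar = 0) (x : E) :
    (1 / (n : ℝ)) * ∑ i, ‖gradient (f i) x - gradient (f i) xstar‖ ^ 2 ≤
      2 * L * (favg x - favg xstar) := by
  have hn' : (0 : ℝ) < n := Nat.cast_pos.mpr hn
  -- gradient of favg at xstar
  have hgrad : HasGradientAt favg ((1 / (n : ℝ)) • ∑ i, gradient (f i) xstar) xstar := by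
    rw [hasGradientAt_iff_hasFDerivAt, hfavg]
    have : (InnerProductSpace.toDual ℝ E) ((1 / (n : ℝ)) • ∑ i, gradient (f i) xstar)
        = (1 / (n : ℝ)) • ∑ i, (InnerProductSpace.toDual ℝ E) (gradient (f i) xstar) := by
      rw [map_smul, map_sum]
    rw [this]
    exact (HasFDerivAt.fun_sum (fun i _ => ((hdiff i xstar).hasGradientAt).hasFDerivAt)).const_mul _
  have hsum0 : ∑ i, gradient (f i) xstar = 0 := by
    have := hgrad.gradient
    rw [hstar] at this
    have h1n : (1 / (n : ℝ)) ≠ 0 := by positivity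
    exact (smul_eq_zero.mp this.symm).resolve_left h1n
  have hinner0 : ∑ i, ⟪gradient (f i) xstar, x - xstar⟫ = 0 := by
    rw [← sum_inner, hsum0, inner_zero_left]
  have hkey : ∀ i, ‖gradient (f i) x - gradient (f i) xstar‖ ^ 2 ≤
      2 * L * (f i x - f i xstar - ⟪gradient (f i) xstar, x - xstar⟫) :=
    fun i => key_ineq hL (hconv i) (hsmooth i) x xstar
  have hsum : ∑ i, ‖gradient (f i) x - gradient (f i) xstar‖ ^ 2 ≤
      2 * L * ((∑ i, f i x) - (∑ i, f i xstar)) := by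
    calc ∑ i, ‖gradient (f i) x - gradient (f i) xstar‖ ^ 2
        ≤ ∑ i, 2 * L * (f i x - f i xstar - ⟪gradient (f i) xstar, x - xstar⟫) :=
          Finset.sum_le_sum fun i _ => hkey i
      _ = 2 * L * ((∑ i, f i x) - (∑ i, f i xstar)) := by
          rw [← Finset.mul_sum, Finset.sum_sub_distrib, Finset.sum_sub_distrib, hinner0,
            sub_zero]
  rw [hfavg]
  simp only
  calc (1 / (n : ℝ)) * ∑ i, ‖gradient (f i) x - gradient (f i) xstar‖ ^ 2
      ≤ (1 / (n : ℝ)) * (2 * L * ((∑ i, f i x) - (∑ i, f i xstar))) := by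
        apply mul_le_mul_of_nonneg_left hsum (by positivity)
    _ = 2 * L * ((1 / (n : ℝ)) * ∑ i, f i x - (1 / (n : ℝ)) * ∑ i, f i xstar) := by ring
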